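/- Bialternant formula for factorial Schur functions: s_μ(x|y) = a_{μ+ρ}(x|y) / a_ρ(x|y), where a_ξ(x|y) = det[(x_j|y)^{ξ_i}]_{1≤i,j≤d} and (x_j|y)^k = (x_j - y_1)···(x_j - y_k), and ρ = (d-1, d-2, ..., 0). -/

import Mathlib

open scoped Classical
open MvPolynomial

noncomputable section

namespace EqLR

/-- Ambient polynomial ring `ℂ[x_1,…,x_d ; y_i (i ∈ ℤ)]`.
The variables `x_j` are indexed by `Fin d` (so `x_{j+1} = X (Sum.inl j)`), and the
variables `y_i` are indexed by `ℤ` (only positive indices actually occur). -/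
abbrev P (d : ℕ) := MvPolynomial (Fin d ⊕ ℤ) ℂ

/-- The variable `y_i`. -/
def yI (d : ℕ) (i : ℤ) : P d := X (Sum.inr i)

/-- The variable `x_v` for a value `v ∈ {1,…,d}` (junk value `0` otherwise). -/
def xv (d : ℕ) (v : ℕ) : P d :=
  if h : v - 1 < d then X (Sum.inl ⟨v - 1, h⟩) else 0

/-- The component `ξ_v` of a vector `ξ ∈ ℕ^d`, for a (1-based) value `v ∈ {1,…,d}`. -/
def vecAt {d : ℕ} (ξ : Fin d → ℕ) (v : ℕ) : ℕ :=
  if h : v - 1 < d then ξ ⟨v - 1, h⟩ else 0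

/-- `μ ∈ ℕ^d` is a partition:  `μ_1 ≥ μ_2 ≥ … ≥ μ_d`. -/
def IsPartitionVec {d : ℕ} (μ : Fin d → ℕ) : Prop :=
  ∀ i j : Fin d, i ≤ j → μ j ≤ μ i

/-- `|μ| = μ_1 + ⋯ + μ_d`. -/
def wt {d : ℕ} (μ : Fin d → ℕ) : ℕ := ∑ i, μ i

/-- `ρ = (d-1, d-2, …, 0)`. -/
def rho (d : ℕ) : Fin d → ℕ := fun i => d - 1 - (i : ℕ)

/-- Cells `(r, c)` (both 0-based) of the Young/reverse Young diagram whose row `r` has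
length `μ_{r+1}`.  For the reverse diagram, rows are numbered bottom-to-top and columns
right-to-left; for the ordinary Young diagram, top-to-bottom and left-to-right. -/
def cells (d : ℕ) (μ : Fin d → ℕ) : Finset (ℕ × ℕ) :=
  (Finset.range d ×ˢ Finset.range (Finset.univ.sup μ + 1)).filter
    fun rc => ∃ h : rc.1 < d, rc.2 < μ ⟨rc.1, h⟩

/-- In the column reading word of a *reverse* diagram (columns right-to-left, i.e. in
increasing 0-based column index, each column read top-to-bottom, i.e. in decreasing
0-based row index), the cell `b` is read strictly before the cell `a`. -/
def revBefore (a b : ℕ × ℕ) : Prop := b.2 < a.2 ∨ (b.2 = a.2 ∧ a.1 < b.1)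

/-- In the column reading word of an ordinary Young diagram (rightmost column first,
each column read top-to-bottom), the cell `b` is read strictly before the cell `a`. -/
def youngBefore (a b : ℕ × ℕ) : Prop := a.2 < b.2 ∨ (b.2 = a.2 ∧ b.1 < a.1)

/-- A reverse tableau of shape `μ`: entries in `{1,…,d}`, weakly increasing along rows
(left to right) and strictly increasing down columns (top to bottom). -/
structure RevTableau (d : ℕ) (μ : Fin d → ℕ) where
  val : ℕ × ℕ → ℕ
  mem : ∀ a ∈ cells d μ, 1 ≤ val a ∧ val a ≤ d
  zero : ∀ a ∉ cells d μ, val a = 0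
  row : ∀ r c : ℕ, (r, c + 1) ∈ cells d μ → val (r, c + 1) ≤ val (r, c)
  col : ∀ r c : ℕ, (r + 1, c) ∈ cells d μ → val (r + 1, c) < val (r, c)

/-- The factor `x_v - y_{(d+1-v) + c(a) - r(a)}` attached to an entry of value `v` in
the cell `a` of the reverse diagram (`c(a) = a.2 + 1`, `r(a) = a.1 + 1`, 1-based). -/
def factor (d : ℕ) (v : ℕ) (a : ℕ × ℕ) : P d :=
  xv d v - yI d ((d : ℤ) + 1 - (v : ℤ) + (a.2 : ℤ) - (a.1 : ℤ))

/-- The factorial Schur function `s_μ(x|y) = Σ_R (x|y)^R`. -/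
def fSchur (d : ℕ) (μ : Fin d → ℕ) : P d :=
  ∑ᶠ R : RevTableau d μ, ∏ a ∈ cells d μ, factor d (R.val a) a

/-- The ordinary Schur function `s_μ(x) = Σ_R x^R`. -/
def schurX (d : ℕ) (μ : Fin d → ℕ) : P d :=
  ∑ᶠ R : RevTableau d μ, ∏ a ∈ cells d μ, xv d (R.val a)

/-- The subalgebra `ℂ[y]` of polynomials in the `y` variables only. -/
def ySub (d : ℕ) : Subalgebra ℂ (P d) :=
  Algebra.adjoin ℂ (Set.range fun i : ℤ => yI d i)

/-- `p` is symmetric in the `x` variables. -/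
def SymmX {d : ℕ} (p : P d) : Prop :=
  ∀ σ : Equiv.Perm (Fin d), rename (⇑(Equiv.sumCongr σ (Equiv.refl ℤ))) p = p

/-- The falling factorial power `(x_j | y)^k = (x_j - y_1)⋯(x_j - y_k)`. -/
def ffPow (d : ℕ) (j : Fin d) (k : ℕ) : P d :=
  ∏ i ∈ Finset.range k, (X (Sum.inl j) - yI d ((i : ℤ) + 1))

/-- `(x|y)^ξ = (x_1|y)^{ξ_1} ⋯ (x_d|y)^{ξ_d}`. -/
def xyPow (d : ℕ) (ξ : Fin d → ℕ) : P d := ∏ j : Fin d, ffPow d j (ξ j)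

/-- The alternant `a_ξ(x|y) = det[(x_j|y)^{ξ_i}]`. -/
def aDet (d : ℕ) (ξ : Fin d → ℕ) : P d :=
  Matrix.det (Matrix.of fun i j : Fin d => ffPow d j (ξ i))

/-! ### Skew barred tableaux of shape `λ*μ` -/

/-- A skew barred tableau of shape `λ*μ`: the Young diagram `λ` (placed above and to
the right of the reverse diagram `μ`) is filled with values in `{1,…,d}` (field `top`),
the reverse diagram `μ` is filled with values in `{1,…,d}` (field `bot`), some of whose
cells may be barred (field `barred`); values weakly increase along rows left-to-right
and strictly increase down columns, ignoring bars. -/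
structure SkewBarredTableau (d : ℕ) (lam mu : Fin d → ℕ) where
  top : ℕ × ℕ → ℕ
  bot : ℕ × ℕ → ℕ
  barred : ℕ × ℕ → Prop
  top_mem : ∀ a ∈ cells d lam, 1 ≤ top a ∧ top a ≤ d
  top_zero : ∀ a ∉ cells d lam, top a = 0
  bot_mem : ∀ a ∈ cells d mu, 1 ≤ bot a ∧ bot a ≤ d
  bot_zero : ∀ a ∉ cells d mu, bot a = 0
  barred_sub : ∀ a, barred a → a ∈ cells d mu
  top_row : ∀ r c : ℕ, (r, c + 1) ∈ cells d lam → top (r, c) ≤ top (r, c + 1)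
  top_col : ∀ r c : ℕ, (r + 1, c) ∈ cells d lam → top (r, c) < top (r + 1, c)
  bot_row : ∀ r c : ℕ, (r, c + 1) ∈ cells d mu → bot (r, c + 1) ≤ bot (r, c)
  bot_col : ∀ r c : ℕ, (r + 1, c) ∈ cells d mu → bot (r + 1, c) < bot (r, c)

namespace SkewBarredTableau

variable {d : ℕ} {lam mu : Fin d → ℕ}

/-- `ω(L^u_{<a})_k`: the number of `k`'s among the unbarred entries of `L` read strictly
before the `μ`-cell `a` in the unbarred column word (all of `λ` is read before `μ`). -/
def countBefore (L : SkewBarredTableau d lam mu) (a : ℕ × ℕ) (k : ℕ) : ℕ :=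
  ((cells d lam).filter fun b => L.top b = k).card +
  ((cells d mu).filter fun b => ¬ L.barred b ∧ L.bot b = k ∧ revBefore a b).card

/-- `ω(L^u_{≤a})_k`: as `countBefore`, but the entry of `a` itself is also counted when
`a` is unbarred. -/
def countUpTo (L : SkewBarredTableau d lam mu) (a : ℕ × ℕ) (k : ℕ) : ℕ :=
  ((cells d lam).filter fun b => L.top b = k).card +
  ((cells d mu).filter fun b => ¬ L.barred b ∧ L.bot b = k ∧ (revBefore a b ∨ b = a)).card

/-- Prefix content within the `λ`-part of the word. -/
def topCountUpTo (L : SkewBarredTableau d lam mu) (a : ℕ × ℕ) (k : ℕ) : ℕ :=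
  ((cells d lam).filter fun b => L.top b = k ∧ (youngBefore a b ∨ b = a)).card

/-- `ω(L^u)_k`: total content of the unbarred column word of `L`. -/
def content (L : SkewBarredTableau d lam mu) (k : ℕ) : ℕ :=
  ((cells d lam).filter fun b => L.top b = k).card +
  ((cells d mu).filter fun b => ¬ L.barred b ∧ L.bot b = k).card

/-- The unbarred column word of `L` is Yamanouchi: every prefix contains at least as
many `k`'s as `(k+1)`'s, for every `k ≥ 1`. -/
def Yamanouchi (L : SkewBarredTableau d lam mu) : Prop :=
  (∀ a ∈ cells d lam, ∀ k : ℕ, 1 ≤ k → L.topCountUpTo a (k + 1) ≤ L.topCountUpTo a k) ∧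
  (∀ a ∈ cells d mu, ¬ L.barred a → ∀ k : ℕ, 1 ≤ k →
      L.countUpTo a (k + 1) ≤ L.countUpTo a k)

/-- `L` is an equivariant Littlewood–Richardson skew tableau of shape `λ*μ` and unbarred
content `ν`. -/
def IsLR (L : SkewBarredTableau d lam mu) (ν : Fin d → ℕ) : Prop :=
  L.Yamanouchi ∧ ∀ i : Fin d, L.content ((i : ℕ) + 1) = ν i

/-- The index `|a|' + ω(L^u_{<a})_{|a|}` of the first `y` in the factor of `c_L` at a
barred cell `a`. -/
def eIdx (L : SkewBarredTableau d lam mu) (a : ℕ × ℕ) : ℤ :=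
  ((d : ℤ) + 1 - (L.bot a : ℤ)) + (L.countBefore a (L.bot a) : ℤ)

/-- The index `|a|' + c(a) - r(a)` of the second `y` in the factor of `c_L` at a barred
cell `a`. -/
def fIdx (L : SkewBarredTableau d lam mu) (a : ℕ × ℕ) : ℤ :=
  ((d : ℤ) + 1 - (L.bot a : ℤ)) + (a.2 : ℤ) - (a.1 : ℤ)

/-- The weight `c_L = ∏_{a barred} (y_{|a|'+ω(L^u_{<a})_{|a|}} - y_{|a|'+c(a)-r(a)})`. -/
def cWt (L : SkewBarredTableau d lam mu) : P d :=
  ∏ a ∈ (cells d mu).filter (fun a => L.barred a), (yI d (L.eIdx a) - yI d (L.fIdx a))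

/-- `Δ(a) = ω(L^u_{≤a})_{|a|} - c(a) + r(a)`. -/
def Δ (L : SkewBarredTableau d lam mu) (a : ℕ × ℕ) : ℤ :=
  (L.countUpTo a (L.bot a) : ℤ) - ((a.2 : ℤ) + 1) + ((a.1 : ℤ) + 1)

end SkewBarredTableau

/-! ### Reverse barred tableaux -/

/-- A reverse barred tableau of shape `μ`. -/
structure RevBarredTableau (d : ℕ) (μ : Fin d → ℕ) where
  val : ℕ × ℕ → ℕ
  barred : ℕ × ℕ → Prop
  mem : ∀ a ∈ cells d μ, 1 ≤ val a ∧ val a ≤ d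
  zero : ∀ a ∉ cells d μ, val a = 0
  barred_sub : ∀ a, barred a → a ∈ cells d μ
  row : ∀ r c : ℕ, (r, c + 1) ∈ cells d μ → val (r, c + 1) ≤ val (r, c)
  col : ∀ r c : ℕ, (r + 1, c) ∈ cells d μ → val (r + 1, c) < val (r, c)

namespace RevBarredTableau

variable {d : ℕ} {μ : Fin d → ℕ}

/-- `ω(B^u_{<a})_k`. -/
def countBefore (B : RevBarredTableau d μ) (a : ℕ × ℕ) (k : ℕ) : ℕ :=
  ((cells d μ).filter fun b => ¬ B.barred b ∧ B.val b = k ∧ revBefore a b).card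

/-- `ω(B^u_{≤a})_k` (including `a` itself when unbarred). -/
def countUpTo (B : RevBarredTableau d μ) (a : ℕ × ℕ) (k : ℕ) : ℕ :=
  ((cells d μ).filter fun b => ¬ B.barred b ∧ B.val b = k ∧ (revBefore a b ∨ b = a)).card

/-- `ω(B^u)_k`. -/
def content (B : RevBarredTableau d μ) (k : ℕ) : ℕ :=
  ((cells d μ).filter fun b => ¬ B.barred b ∧ B.val b = k).card

/-- `e_{ξ,B}(a) = (ξ + ω(B^u_{<a}))_{|a|}`. -/
def eIdx (B : RevBarredTableau d μ) (ξ : Fin d → ℕ) (a : ℕ × ℕ) : ℤ :=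
  (vecAt ξ (B.val a) : ℤ) + (B.countBefore a (B.val a) : ℤ)

/-- `f_B(a) = |a|' + c(a) - r(a)`. -/
def fIdx (B : RevBarredTableau d μ) (a : ℕ × ℕ) : ℤ :=
  ((d : ℤ) + 1 - (B.val a : ℤ)) + (a.2 : ℤ) - (a.1 : ℤ)

/-- `c_{ξ,B} = ∏_{a barred} (y_{e_{ξ,B}(a)} - y_{f_B(a)})`. -/
def cXi (B : RevBarredTableau d μ) (ξ : Fin d → ℕ) : P d :=
  ∏ a ∈ (cells d μ).filter (fun a => B.barred a), (yI d (B.eIdx ξ a) - yI d (B.fIdx a))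

/-- The unbarred column word of `λ*B` is Yamanouchi (the `λ`-part is the canonical
filling of `λ`, whose whole content `λ` is added to every prefix of `B^u`). -/
def StarYam (B : RevBarredTableau d μ) (lam : Fin d → ℕ) : Prop :=
  ∀ a ∈ cells d μ, ¬ B.barred a → ∀ k : ℕ, 1 ≤ k →
    vecAt lam (k + 1) + B.countUpTo a (k + 1) ≤ vecAt lam k + B.countUpTo a k

end RevBarredTableau

/-! ### Reverse hatted tableaux -/

/-- A hat decoration: none, left hat, or right hat. -/
inductive Hat where
  | unhatted : Hat
  | left : Hat
  | right : Hat
deriving DecidableEq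

/-- A reverse hatted tableau of shape `μ`. -/
structure RevHattedTableau (d : ℕ) (μ : Fin d → ℕ) where
  val : ℕ × ℕ → ℕ
  hat : ℕ × ℕ → Hat
  mem : ∀ a ∈ cells d μ, 1 ≤ val a ∧ val a ≤ d
  zero : ∀ a ∉ cells d μ, val a = 0
  hat_out : ∀ a ∉ cells d μ, hat a = Hat.unhatted
  row : ∀ r c : ℕ, (r, c + 1) ∈ cells d μ → val (r, c + 1) ≤ val (r, c)
  col : ∀ r c : ℕ, (r + 1, c) ∈ cells d μ → val (r + 1, c) < val (r, c)

namespace RevHattedTableau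

variable {d : ℕ} {μ : Fin d → ℕ}

/-- `ω(H^u_{<a})_k`: content of the unhatted column word of `H` read before `a`. -/
def countBefore (H : RevHattedTableau d μ) (a : ℕ × ℕ) (k : ℕ) : ℕ :=
  ((cells d μ).filter fun b => H.hat b = Hat.unhatted ∧ H.val b = k ∧ revBefore a b).card

/-- `ω(H^u)_k`. -/
def content (H : RevHattedTableau d μ) (k : ℕ) : ℕ :=
  ((cells d μ).filter fun b => H.hat b = Hat.unhatted ∧ H.val b = k).card

/-- `e_{ξ,H}(a) = (ξ + ω(H^u_{<a}))_{|a|}`. -/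
def eIdx (H : RevHattedTableau d μ) (ξ : Fin d → ℕ) (a : ℕ × ℕ) : ℤ :=
  (vecAt ξ (H.val a) : ℤ) + (H.countBefore a (H.val a) : ℤ)

/-- `f_H(a) = |a|' + c(a) - r(a)`. -/
def fIdx (H : RevHattedTableau d μ) (a : ℕ × ℕ) : ℤ :=
  ((d : ℤ) + 1 - (H.val a : ℤ)) + (a.2 : ℤ) - (a.1 : ℤ)

/-- `d_{ξ,H} = ∏_{a ∈ H^l} y_{e_{ξ,H}(a)} · ∏_{a ∈ H^r} (-y_{f_H(a)})`. -/
def dWt (H : RevHattedTableau d μ) (ξ : Fin d → ℕ) : P d :=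
  (∏ a ∈ (cells d μ).filter (fun a => H.hat a = Hat.left), yI d (H.eIdx ξ a)) *
  ∏ a ∈ (cells d μ).filter (fun a => H.hat a = Hat.right), (-(yI d (H.fIdx a)))

end RevHattedTableau

/-- `H̄ = B`: `H` unbars to the reverse barred tableau `B`. -/
def UnbarsTo {d : ℕ} {μ : Fin d → ℕ} (H : RevHattedTableau d μ)
    (B : RevBarredTableau d μ) : Prop :=
  H.val = B.val ∧ ∀ a, (H.hat a ≠ Hat.unhatted ↔ B.barred a)

/-- The simple transposition `σ_i` on values: exchanges `i` and `i+1`. -/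
def swapVal (i v : ℕ) : ℕ := if v = i then i + 1 else if v = i + 1 then i else v

/-- The action of `σ_i` on `ℕ^d` by permuting coordinates. -/
def swapVec {d : ℕ} (i : ℕ) (ξ : Fin d → ℕ) : Fin d → ℕ :=
  fun j => vecAt ξ (swapVal i ((j : ℕ) + 1))

/-! ### Reverse (barred) subtableaux -/

/-- A reverse subtableau of shape `μ`: each cell is empty (value `0`) or carries a value
in `{1,…,d}`; no row or column conditions. -/
structure RevSubTableau (d : ℕ) (μ : Fin d → ℕ) where
  val : ℕ × ℕ → ℕ
  mem : ∀ a ∈ cells d μ, val a ≤ d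
  zero : ∀ a ∉ cells d μ, val a = 0

/-- A reverse barred subtableau of shape `μ`: a reverse subtableau some of whose filled
cells are barred. -/
structure RevBarredSubTableau (d : ℕ) (μ : Fin d → ℕ) where
  val : ℕ × ℕ → ℕ
  barred : ℕ × ℕ → Prop
  mem : ∀ a ∈ cells d μ, val a ≤ d
  zero : ∀ a ∉ cells d μ, val a = 0
  barred_filled : ∀ a, barred a → a ∈ cells d μ ∧ val a ≠ 0

/-- `(x|y)^R` for a reverse subtableau `R`. -/
def RevSubTableau.xyProd {d : ℕ} {μ : Fin d → ℕ} (R : RevSubTableau d μ) : P d :=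
  ∏ a ∈ (cells d μ).filter (fun a => R.val a ≠ 0), factor d (R.val a) a

namespace RevBarredSubTableau

variable {d : ℕ} {μ : Fin d → ℕ}

/-- `ω(B^u_{<a})_k`: unbarred filled entries of value `k` read before `a`. -/
def countBefore (B : RevBarredSubTableau d μ) (a : ℕ × ℕ) (k : ℕ) : ℕ :=
  ((cells d μ).filter fun b => ¬ B.barred b ∧ B.val b = k ∧ revBefore a b).card

/-- `ω(B^u)_k`. -/
def content (B : RevBarredSubTableau d μ) (k : ℕ) : ℕ :=
  ((cells d μ).filter fun b => ¬ B.barred b ∧ B.val b = k).card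

/-- `e_{ξ,B}(a) = (ξ + ω(B^u_{<a}))_{|a|}`. -/
def eIdx (B : RevBarredSubTableau d μ) (ξ : Fin d → ℕ) (a : ℕ × ℕ) : ℤ :=
  (vecAt ξ (B.val a) : ℤ) + (B.countBefore a (B.val a) : ℤ)

/-- `f_B(a) = |a|' + c(a) - r(a)`. -/
def fIdx (B : RevBarredSubTableau d μ) (a : ℕ × ℕ) : ℤ :=
  ((d : ℤ) + 1 - (B.val a : ℤ)) + (a.2 : ℤ) - (a.1 : ℤ)

/-- `c_{ξ,B}`. -/
def cXi (B : RevBarredSubTableau d μ) (ξ : Fin d → ℕ) : P d :=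
  ∏ a ∈ (cells d μ).filter (fun a => B.barred a), (yI d (B.eIdx ξ a) - yI d (B.fIdx a))

end RevBarredSubTableau

end EqLR

namespace EqLR

/-! ### Basic facts about cells and tableaux -/

lemma mem_cells {d : ℕ} {μ : Fin d → ℕ} {a : ℕ × ℕ} :
    a ∈ cells d μ ↔ ∃ h : a.1 < d, a.2 < μ ⟨a.1, h⟩ := by
  constructor
  · intro h; exact (Finset.mem_filter.mp h).2
  · rintro ⟨h1, h2⟩
    refine Finset.mem_filter.mpr ⟨Finset.mem_product.mpr ⟨?_, ?_⟩, h1, h2⟩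
    · exact Finset.mem_range.mpr h1
    · exact Finset.mem_range.mpr
        (Nat.lt_succ_of_lt (lt_of_lt_of_le h2 (Finset.le_sup (Finset.mem_univ _))))

lemma mem_cells' {d : ℕ} {μ : Fin d → ℕ} {r c : ℕ} (h : r < d) :
    (r, c) ∈ cells d μ ↔ c < μ ⟨r, h⟩ := by
  rw [mem_cells]
  constructor
  · rintro ⟨h', hc⟩; convert hc using 2
  · intro hc; exact ⟨h, hc⟩

lemma cells_left {d : ℕ} {μ : Fin d → ℕ} {r c c' : ℕ} (h : (r, c) ∈ cells d μ)
    (hc : c' ≤ c) : (r, c') ∈ cells d μ := by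
  rw [mem_cells] at h ⊢
  obtain ⟨h1, h2⟩ := h
  exact ⟨h1, lt_of_le_of_lt hc h2⟩

lemma RevTableau.ext' {d : ℕ} {μ : Fin d → ℕ} {T S : RevTableau d μ}
    (h : T.val = S.val) : T = S := by
  cases T; cases S; simp_all

noncomputable instance {d : ℕ} {μ : Fin d → ℕ} : Fintype (RevTableau d μ) := by
  classical
  have hinj : Function.Injective
      (fun T : RevTableau d μ => (fun a : {x // x ∈ cells d μ} =>
        (⟨T.val a, Nat.lt_succ_of_le (T.mem a a.2).2⟩ : Fin (d+1)))) := by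
    intro T S h
    apply RevTableau.ext'
    funext a
    by_cases ha : a ∈ cells d μ
    · have := congrFun h ⟨a, ha⟩
      simpa [Fin.mk.injEq] using this
    · rw [T.zero a ha, S.zero a ha]
  have : Finite (RevTableau d μ) := Finite.of_injective _ hinj
  exact Fintype.ofFinite _

lemma fSchur_eq_sum (d : ℕ) (μ : Fin d → ℕ) :
    fSchur d μ = ∑ T : RevTableau d μ, ∏ a ∈ cells d μ, factor d (T.val a) a :=
  finsum_eq_sum_of_fintype _

/-- A downward-closed finset of naturals is an initial segment. -/
lemma downclosed_mem_iff {S : Finset ℕ} (h : ∀ c, c + 1 ∈ S → c ∈ S) :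
    ∀ x, x ∈ S ↔ x < S.card := by
  have hle : ∀ x y, y ≤ x → x ∈ S → y ∈ S := by
    intro x
    induction x with
    | zero => intro y hy hx; simpa [Nat.le_zero.mp hy] using hx
    | succ m ih =>
      intro y hy hx
      rcases Nat.lt_or_ge y (m+1) with h' | h'
      · exact ih y (Nat.lt_succ_iff.mp h') (h m hx)
      · have : y = m + 1 := le_antisymm hy h'
        rwa [this]
  intro x
  constructor
  · intro hx
    have hsub : Finset.range (x+1) ⊆ S := by
      intro y hy
      exact hle x y (Nat.lt_succ_iff.mp (Finset.mem_range.mp hy)) hx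
    have := Finset.card_le_card hsub
    simpa using this
  · intro hx
    by_contra hxS
    have hsub : S ⊆ Finset.range x := by
      intro z hz
      rcases Nat.lt_or_ge z x with h' | h'
      · exact Finset.mem_range.mpr h'
      · exact absurd (hle z x h' hz) hxS
    have := Finset.card_le_card hsub
    simp only [Finset.card_range] at this
    omega

/-! ### Renaming from `d` to `d+1` variables -/

/-- The embedding of variables `x_j ↦ x_{j+1}`, `y_i ↦ y_i`. -/
def emb (n : ℕ) : Fin n ⊕ ℤ → Fin (n+1) ⊕ ℤ := Sum.map Fin.succ id

lemma rename_yI (n : ℕ) (i : ℤ) : rename (emb n) (yI n i) = yI (n+1) i := by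
  simp [yI, emb]

lemma rename_ffPow (n : ℕ) (j : Fin n) (k : ℕ) :
    rename (emb n) (ffPow n j k) = ffPow (n+1) j.succ k := by
  simp [ffPow, yI, emb]

lemma rename_aDet (n : ℕ) (ξ : Fin n → ℕ) :
    rename (emb n) (aDet n ξ) =
      Matrix.det (Matrix.of fun i j : Fin n => ffPow (n+1) j.succ (ξ i)) := by
  rw [aDet, AlgHom.map_det (rename (emb n))]
  congr 1
  apply Matrix.ext
  intro i j
  simpa using rename_ffPow n j (ξ i)

/-! ### Branching data -/

/-- The box of partitions interlacing `μ`. -/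
def box (n : ℕ) (μ : Fin (n+1) → ℕ) : Finset (Fin n → ℕ) :=
  Fintype.piFinset fun i => Finset.Icc (μ i.succ) (μ i.castSucc)

set_option maxRecDepth 4000 in
lemma mem_box {n : ℕ} {μ : Fin (n+1) → ℕ} {lam : Fin n → ℕ} :
    lam ∈ box n μ ↔ ∀ i : Fin n, μ i.succ ≤ lam i ∧ lam i ≤ μ i.castSucc := by
  rw [box, Fintype.mem_piFinset]
  simp only [Finset.mem_Icc]

/-- Extension of `lam` by a trailing `0`. -/
def lamext {n : ℕ} (lam : Fin n → ℕ) : Fin (n+1) → ℕ :=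
  fun i => if h : (i : ℕ) < n then lam ⟨i, h⟩ else 0

lemma lamext_castSucc {n : ℕ} (lam : Fin n → ℕ) (i : Fin n) :
    lamext lam i.castSucc = lam i := by
  simp [lamext, i.isLt]

lemma lamext_last {n : ℕ} (lam : Fin n → ℕ) : lamext lam (Fin.last n) = 0 := by
  simp [lamext]

/-- The strip weight `Φ_{μ/λ}(x_1)`. -/
def Phi (n : ℕ) (μ : Fin (n+1) → ℕ) (lam : Fin n → ℕ) : P (n+1) :=
  ∏ i : Fin (n+1), ∏ s ∈ Finset.Ico (lamext lam i + (n - (i : ℕ))) (μ i + (n - (i : ℕ))),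
    (X (Sum.inl (0 : Fin (n+1))) - yI (n+1) ((s : ℤ) + 1))

/-- `(x_1 - x_2) ⋯ (x_1 - x_d)`. -/
def vdm (n : ℕ) : P (n+1) :=
  ∏ j : Fin n, (X (Sum.inl (0 : Fin (n+1))) - X (Sum.inl j.succ))

lemma box_partition {n : ℕ} {μ : Fin (n+1) → ℕ} (hμ : IsPartitionVec μ)
    {lam : Fin n → ℕ} (hl : lam ∈ box n μ) : IsPartitionVec lam := by
  rw [mem_box] at hl
  intro i j hij
  rcases eq_or_lt_of_le hij with h | h
  · exact le_of_eq (by rw [h])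
  · calc lam j ≤ μ j.castSucc := (hl j).2
      _ ≤ μ i.succ := hμ _ _ (by
        have hv : (i : ℕ) < (j : ℕ) := h
        rw [Fin.le_def]
        simp only [Fin.val_succ, Fin.coe_castSucc]
        omega)
      _ ≤ lam i := (hl i).1


end EqLR
namespace EqLR

section DetBranch

variable (n : ℕ) (μ : Fin (n+1) → ℕ)

/-- The factor `x₁ - y_{s+1}`. -/
def xf (s : ℕ) : P (n+1) := X (Sum.inl (0 : Fin (n+1))) - yI (n+1) ((s : ℤ) + 1)

/-- Exponents of the big alternant. -/
def Ee : Fin (n+1) → ℕ := fun i => μ i + (n - (i : ℕ))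

/-- Row-operation coefficients. -/
def cc : Fin n → P (n+1) :=
  fun i => ∏ s ∈ Finset.Ico (Ee n μ i.succ) (Ee n μ i.castSucc), xf n s

lemma ffPow_split (j : Fin (n+1)) {a b : ℕ} (hab : a ≤ b) :
    ffPow (n+1) j b = ffPow (n+1) j a *
      ∏ s ∈ Finset.Ico a b, (X (Sum.inl j) - yI (n+1) ((s : ℤ) + 1)) := by
  rw [ffPow, ffPow]
  simp only [Finset.range_eq_Ico]
  exact (Finset.prod_Ico_consecutive _ (Nat.zero_le a) hab).symm

lemma hEle (hμ : IsPartitionVec μ) (i : Fin n) :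
    Ee n μ i.succ ≤ Ee n μ i.castSucc := by
  have h := hμ i.castSucc i.succ (Fin.castSucc_le_succ i)
  have hi : (i : ℕ) < n := i.isLt
  have e1 : Ee n μ i.succ = μ i.succ + (n - ((i : ℕ)+1)) := by
    simp [Ee]
  have e2 : Ee n μ i.castSucc = μ i.castSucc + (n - (i : ℕ)) := by
    simp [Ee]
  rw [e1, e2]
  exact Nat.add_le_add h (Nat.sub_le_sub_left (Nat.le_succ _) n)

lemma telescope (j : Fin (n+1)) (b : ℕ) :
    ∀ (k a : ℕ), b = a + k →
      (X (Sum.inl (0 : Fin (n+1))) - X (Sum.inl j)) *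
        ∑ s ∈ Finset.Ico a b, (∏ t ∈ Finset.Ico (s+1) b, xf n t) * ffPow (n+1) j s
      = (∏ t ∈ Finset.Ico a b, xf n t) * ffPow (n+1) j a - ffPow (n+1) j b := by
  intro k
  induction k with
  | zero =>
    intro a hb
    subst hb
    simp
  | succ m ih =>
    intro a hb
    have hab : a < b := by omega
    rw [Finset.sum_eq_sum_Ico_succ_bot hab, Finset.prod_eq_prod_Ico_succ_bot hab]
    have h2 : ffPow (n+1) j (a+1)
        = ffPow (n+1) j a * (X (Sum.inl j) - yI (n+1) ((a : ℤ) + 1)) := by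
      rw [ffPow, ffPow, Finset.prod_range_succ]
    have h3 := ih (a+1) (by omega)
    rw [mul_add, h3, h2]
    simp only [xf]
    ring

lemma entry_eq (hμ : IsPartitionVec μ) (i : Fin n) (j : Fin n) :
    (X (Sum.inl (0 : Fin (n+1))) - X (Sum.inl j.succ)) *
      ∑ k ∈ Finset.Icc (μ i.succ) (μ i.castSucc),
        (∏ s ∈ Finset.Ico (k + (n - (i : ℕ))) (Ee n μ i.castSucc), xf n s) *
          ffPow (n+1) j.succ (k + (n - 1 - (i : ℕ)))
    = cc n μ i * ffPow (n+1) j.succ (Ee n μ i.succ)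
        - ffPow (n+1) j.succ (Ee n μ i.castSucc) := by
  have hi : (i : ℕ) < n := i.isLt
  have hreidx : ∑ k ∈ Finset.Icc (μ i.succ) (μ i.castSucc),
      (∏ s ∈ Finset.Ico (k + (n - (i : ℕ))) (Ee n μ i.castSucc), xf n s) *
        ffPow (n+1) j.succ (k + (n - 1 - (i : ℕ)))
      = ∑ s ∈ Finset.Ico (Ee n μ i.succ) (Ee n μ i.castSucc),
          (∏ t ∈ Finset.Ico (s+1) (Ee n μ i.castSucc), xf n t) * ffPow (n+1) j.succ s := by
    have hmap : Finset.Icc (μ i.succ + (n - 1 - (i : ℕ))) (μ i.castSucc + (n - 1 - (i : ℕ)))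
        = Finset.map (addRightEmbedding (n - 1 - (i : ℕ))) (Finset.Icc (μ i.succ) (μ i.castSucc)) :=
      (Finset.map_add_right_Icc _ _ _).symm
    have hIccIco : Finset.Ico (Ee n μ i.succ) (Ee n μ i.castSucc)
        = Finset.Icc (μ i.succ + (n - 1 - (i : ℕ))) (μ i.castSucc + (n - 1 - (i : ℕ))) := by
      have h1 : Ee n μ i.succ = μ i.succ + (n - 1 - (i : ℕ)) := by
        simp only [Ee, Fin.val_succ]; omega
      have h2 : Ee n μ i.castSucc = μ i.castSucc + (n - 1 - (i : ℕ)) + 1 := by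
        simp only [Ee, Fin.coe_castSucc]; omega
      rw [h1, h2, Finset.Ico_add_one_right_eq_Icc]
    rw [hIccIco, hmap, Finset.sum_map]
    apply Finset.sum_congr rfl
    intro k _
    simp only [addRightEmbedding_apply]
    have harg : k + (n - (i : ℕ)) = (k + (n - 1 - (i : ℕ))) + 1 := by omega
    rw [harg]
  rw [hreidx]
  have hab := hEle n μ hμ i
  rw [telescope n j.succ (Ee n μ i.castSucc) (Ee n μ i.castSucc - Ee n μ i.succ) (Ee n μ i.succ)
    (by omega)]
  rfl

lemma sum_box_det :
    ∑ lam ∈ box n μ,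
        (∏ i : Fin n, ∏ s ∈ Finset.Ico (lam i + (n - (i : ℕ))) (Ee n μ i.castSucc), xf n s) *
          Matrix.det (Matrix.of fun i j : Fin n =>
            ffPow (n+1) j.succ (lam i + (n - 1 - (i : ℕ))))
      = Matrix.det (Matrix.of fun i j : Fin n =>
          ∑ k ∈ Finset.Icc (μ i.succ) (μ i.castSucc),
            (∏ s ∈ Finset.Ico (k + (n - (i : ℕ))) (Ee n μ i.castSucc), xf n s) *
              ffPow (n+1) j.succ (k + (n - 1 - (i : ℕ)))) := by
  classical
  have hmap := (Matrix.detRowAlternating (n := Fin n) (R := P (n+1))).toMultilinearMap.map_sum_finset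
    (g := fun (i : Fin n) k => (∏ s ∈ Finset.Ico (k + (n - (i : ℕ))) (Ee n μ i.castSucc), xf n s) •
      (fun j : Fin n => ffPow (n+1) j.succ (k + (n - 1 - (i : ℕ)))))
    (A := fun i => Finset.Icc (μ i.succ) (μ i.castSucc))
  have hrows : (Matrix.of fun i j : Fin n =>
      ∑ k ∈ Finset.Icc (μ i.succ) (μ i.castSucc),
        (∏ s ∈ Finset.Ico (k + (n - (i : ℕ))) (Ee n μ i.castSucc), xf n s) *
          ffPow (n+1) j.succ (k + (n - 1 - (i : ℕ))))
      = fun (i : Fin n) => ∑ k ∈ Finset.Icc (μ i.succ) (μ i.castSucc),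
          (∏ s ∈ Finset.Ico (k + (n - (i : ℕ))) (Ee n μ i.castSucc), xf n s) •
            (fun j : Fin n => ffPow (n+1) j.succ (k + (n - 1 - (i : ℕ)))) := by
    funext i j
    rw [Finset.sum_apply]
    simp [smul_eq_mul]
  show _ = Matrix.detRowAlternating _
  rw [hrows, ← AlternatingMap.coe_multilinearMap, hmap]
  rw [box]
  apply Finset.sum_congr rfl
  intro lam _
  rw [MultilinearMap.map_smul_univ, smul_eq_mul]
  rfl

lemma det_rowops (hμ : IsPartitionVec μ) :
    Matrix.det (Matrix.of fun i j : Fin (n+1) => ffPow (n+1) j (Ee n μ i))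
      = ffPow (n+1) 0 (Ee n μ (Fin.last n)) *
        Matrix.det (Matrix.of fun i j : Fin n =>
          cc n μ i * ffPow (n+1) j.succ (Ee n μ i.succ)
            - ffPow (n+1) j.succ (Ee n μ i.castSucc)) := by
  classical
  set M : Matrix (Fin (n+1)) (Fin (n+1)) (P (n+1)) :=
    Matrix.of (fun i j => ffPow (n+1) j (Ee n μ i)) with hM
  set M₂ : Matrix (Fin (n+1)) (Fin (n+1)) (P (n+1)) :=
    Matrix.of (fun i j => Fin.lastCases (motive := fun _ => P (n+1)) (M (Fin.last n) j)
      (fun i' => M i'.castSucc j - cc n μ i' * M i'.succ j) i) with hM2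
  have hdet : M.det = M₂.det := by
    have key := Matrix.det_eq_of_forall_row_eq_smul_add_pred
      (A := M.submatrix (⇑(Fin.revPerm)) (⇑(Fin.revPerm)))
      (B := M₂.submatrix (⇑(Fin.revPerm)) (⇑(Fin.revPerm)))
      (c := fun i : Fin n => cc n μ i.rev) ?_ ?_
    · rw [Matrix.det_submatrix_equiv_self, Matrix.det_submatrix_equiv_self] at key
      exact key
    · intro j
      simp only [Matrix.submatrix_apply, Fin.revPerm_apply, Fin.rev_zero, hM2,
        Matrix.of_apply, Fin.lastCases_last]
    · intro i j
      simp only [Matrix.submatrix_apply, Fin.revPerm_apply, Fin.rev_succ, Fin.rev_castSucc, hM2,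
        Matrix.of_apply, Fin.lastCases_castSucc]
      ring
  rw [hdet, Matrix.det_succ_column_zero]
  rw [Finset.sum_eq_single (Fin.last n)]
  · have hlast0 : M₂ (Fin.last n) 0 = ffPow (n+1) 0 (Ee n μ (Fin.last n)) := by
      simp only [hM2, Matrix.of_apply, Fin.lastCases_last, hM]
    have hminor : (M₂.submatrix (Fin.last n).succAbove Fin.succ)
        = - Matrix.of (fun i j : Fin n =>
            cc n μ i * ffPow (n+1) j.succ (Ee n μ i.succ)
              - ffPow (n+1) j.succ (Ee n μ i.castSucc)) := by
      ext i j
      simp only [Matrix.submatrix_apply, Fin.succAbove_last, hM2, Matrix.of_apply,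
        Fin.lastCases_castSucc, Matrix.neg_apply, hM]
      ring
    rw [hlast0, hminor, Matrix.det_neg]
    simp only [Fintype.card_fin, Fin.val_last]
    have hone : ((-1 : P (n+1)) ^ n) * ((-1 : P (n+1)) ^ n) = 1 := by
      rw [← mul_pow]; norm_num
    calc (-1 : P (n+1)) ^ n * ffPow (n+1) 0 (Ee n μ (Fin.last n)) *
          ((-1 : P (n+1)) ^ n * (Matrix.of fun i j : Fin n =>
            cc n μ i * ffPow (n+1) j.succ (Ee n μ i.succ)
              - ffPow (n+1) j.succ (Ee n μ i.castSucc)).det)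
        = ((-1 : P (n+1)) ^ n * (-1 : P (n+1)) ^ n) *
            (ffPow (n+1) 0 (Ee n μ (Fin.last n)) * (Matrix.of fun i j : Fin n =>
            cc n μ i * ffPow (n+1) j.succ (Ee n μ i.succ)
              - ffPow (n+1) j.succ (Ee n μ i.castSucc)).det) := by ring
      _ = _ := by rw [hone, one_mul]
  · intro i _ hne
    have hi : (i : ℕ) < n := by
      rcases Fin.lt_or_eq_of_le (Fin.le_last i) with h | h
      · exact h
      · exact absurd h hne
    have hic : i = Fin.castSucc ⟨(i : ℕ), hi⟩ := by
      apply Fin.ext; simp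
    have hzero : M₂ i 0 = 0 := by
      rw [hic]
      simp only [hM2, Matrix.of_apply, Fin.lastCases_castSucc, hM]
      have hsp := ffPow_split n 0 (hEle n μ hμ ⟨(i : ℕ), hi⟩)
      rw [hsp, cc]
      simp only [xf]
      ring
    rw [hzero]
    ring
  · intro h
    exact absurd (Finset.mem_univ _) h

/-- Splitting off the last factor of `Phi`. -/
lemma Phi_split (lam : Fin n → ℕ) :
    Phi n μ lam = ffPow (n+1) 0 (Ee n μ (Fin.last n)) *
      ∏ i : Fin n, ∏ s ∈ Finset.Ico (lam i + (n - (i : ℕ))) (Ee n μ i.castSucc), xf n s := by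
  rw [Phi, Fin.prod_univ_castSucc, mul_comm]
  congr 1
  · simp only [lamext_last, Fin.val_last, Nat.sub_self, Nat.add_zero, Nat.zero_add]
    have h2 : Ee n μ (Fin.last n) = μ (Fin.last n) := by
      simp [Ee]
    rw [h2, ffPow, Finset.range_eq_Ico]
  · apply Finset.prod_congr rfl
    intro i _
    rw [lamext_castSucc]
    have h3 : Ee n μ i.castSucc = μ i.castSucc + (n - (i : ℕ)) := by
      simp [Ee]
    rw [h3]
    simp only [Fin.coe_castSucc, xf]

lemma det_branch (hμ : IsPartitionVec μ) :
    ∑ lam ∈ box n μ, Phi n μ lam * vdm n *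
        rename (emb n) (aDet n (fun i => lam i + rho n i))
      = aDet (n+1) (fun i => μ i + rho (n+1) i) := by
  have hE : (fun i : Fin (n+1) => μ i + rho (n+1) i) = Ee n μ := by
    funext i
    simp only [Ee, rho]
    omega
  have hrhs : aDet (n+1) (fun i => μ i + rho (n+1) i)
      = Matrix.det (Matrix.of fun i j : Fin (n+1) => ffPow (n+1) j (Ee n μ i)) := by
    rw [hE, aDet]
  rw [hrhs, det_rowops n μ hμ]
  have hstep : ∀ lam ∈ box n μ,
      Phi n μ lam * vdm n * rename (emb n) (aDet n (fun i => lam i + rho n i))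
      = ffPow (n+1) 0 (Ee n μ (Fin.last n)) *
        ((∏ i : Fin n, ∏ s ∈ Finset.Ico (lam i + (n - (i : ℕ))) (Ee n μ i.castSucc), xf n s) *
          (vdm n * Matrix.det (Matrix.of fun i j : Fin n =>
            ffPow (n+1) j.succ (lam i + (n - 1 - (i : ℕ)))))) := by
    intro lam _
    rw [Phi_split n μ lam, rename_aDet]
    simp only [rho]
    ring
  rw [Finset.sum_congr rfl hstep, ← Finset.mul_sum]
  congr 1
  have h1 : ∑ lam ∈ box n μ,
      (∏ i : Fin n, ∏ s ∈ Finset.Ico (lam i + (n - (i : ℕ))) (Ee n μ i.castSucc), xf n s) *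
        (vdm n * Matrix.det (Matrix.of fun i j : Fin n =>
          ffPow (n+1) j.succ (lam i + (n - 1 - (i : ℕ)))))
      = vdm n * ∑ lam ∈ box n μ,
          (∏ i : Fin n, ∏ s ∈ Finset.Ico (lam i + (n - (i : ℕ))) (Ee n μ i.castSucc), xf n s) *
            Matrix.det (Matrix.of fun i j : Fin n =>
              ffPow (n+1) j.succ (lam i + (n - 1 - (i : ℕ)))) := by
    rw [Finset.mul_sum]
    apply Finset.sum_congr rfl
    intro lam _
    ring
  rw [h1, sum_box_det n μ, vdm, ← Matrix.det_mul_row]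
  congr 1
  apply Matrix.ext
  intro i j
  simp only [Matrix.of_apply]
  exact entry_eq n μ hμ i j

end DetBranch

end EqLR
namespace EqLR

section SchurBranch

variable {n : ℕ} {μ : Fin (n+1) → ℕ}

lemma mem_cells_castSucc {c : ℕ} (i : Fin n) :
    (((i : ℕ), c) ∈ cells (n+1) μ) ↔ c < μ i.castSucc := by
  have h : (i : ℕ) < n + 1 := lt_of_lt_of_le i.isLt (Nat.le_succ n)
  rw [mem_cells' h]
  have : (⟨(i : ℕ), h⟩ : Fin (n+1)) = i.castSucc := Fin.ext (by simp)
  rw [this]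

lemma mem_cells_succ {c : ℕ} (i : Fin n) :
    (((i : ℕ) + 1, c) ∈ cells (n+1) μ) ↔ c < μ i.succ := by
  have h : (i : ℕ) + 1 < n + 1 := by
    have := i.isLt; omega
  rw [mem_cells' h]
  have : (⟨(i : ℕ) + 1, h⟩ : Fin (n+1)) = i.succ := Fin.ext (by simp)
  rw [this]

/-- Row lengths of the sub-diagram of entries `≥ 2`. -/
def tolam (T : RevTableau (n+1) μ) : Fin n → ℕ :=
  fun i => ((Finset.range (μ i.castSucc)).filter (fun c => 2 ≤ T.val ((i : ℕ), c))).card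

lemma val_row_le {d : ℕ} {ν : Fin d → ℕ} (T : RevTableau d ν) {r c : ℕ} (k : ℕ)
    (h : (r, c + k) ∈ cells d ν) : T.val (r, c + k) ≤ T.val (r, c) := by
  induction k with
  | zero => exact le_refl _
  | succ m ih =>
    have hm : (r, c + m) ∈ cells d ν := cells_left h (by omega)
    exact le_trans (T.row r (c + m) h) (ih hm)

lemma val_le_left {d : ℕ} {ν : Fin d → ℕ} (T : RevTableau d ν) {r c c' : ℕ}
    (h : (r, c) ∈ cells d ν) (hcc : c' ≤ c) : T.val (r, c) ≤ T.val (r, c') := by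
  have : c = c' + (c - c') := by omega
  rw [this] at h ⊢
  exact val_row_le T _ h

lemma val_add_fst_le (hμ : IsPartitionVec μ) (T : RevTableau (n+1) μ) :
    ∀ r c, (r, c) ∈ cells (n+1) μ → T.val (r, c) + r ≤ n + 1 := by
  intro r
  induction r with
  | zero =>
    intro c h
    simpa using (T.mem _ h).2
  | succ m ih =>
    intro c h
    rw [mem_cells] at h
    obtain ⟨h1, h2⟩ := h
    have hm1 : m < n + 1 := by omega
    have hm : (m, c) ∈ cells (n+1) μ := by
      rw [mem_cells' hm1]
      exact lt_of_lt_of_le h2 (hμ ⟨m, hm1⟩ ⟨m+1, h1⟩ (by simp [Fin.le_def]))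
    have hcol := T.col m c (by rw [mem_cells]; exact ⟨h1, h2⟩)
    have := ih c hm
    omega

lemma tolam_iff (T : RevTableau (n+1) μ) (i : Fin n) (c : ℕ) :
    c < tolam T i ↔ c < μ i.castSucc ∧ 2 ≤ T.val ((i : ℕ), c) := by
  have hdc : ∀ c, c + 1 ∈ (Finset.range (μ i.castSucc)).filter
      (fun c => 2 ≤ T.val ((i : ℕ), c)) →
      c ∈ (Finset.range (μ i.castSucc)).filter (fun c => 2 ≤ T.val ((i : ℕ), c)) := by
    intro c hc
    simp only [Finset.mem_filter, Finset.mem_range] at hc ⊢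
    obtain ⟨h1, h2⟩ := hc
    have hcells : ((i : ℕ), c + 1) ∈ cells (n+1) μ := (mem_cells_castSucc i).mpr h1
    exact ⟨by omega, le_trans h2 (T.row (i : ℕ) c hcells)⟩
  have := downclosed_mem_iff hdc c
  rw [tolam]
  rw [← this]
  simp [Finset.mem_filter, Finset.mem_range]

lemma tolam_mem_box (hμ : IsPartitionVec μ) (T : RevTableau (n+1) μ) :
    tolam T ∈ box n μ := by
  rw [mem_box]
  intro i
  constructor
  · by_contra hlt
    push_neg at hlt
    set c := tolam T i with hc
    have hcμ : c < μ i.succ := hlt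
    have h2 : 2 ≤ T.val ((i : ℕ), c) := by
      have hcell : ((i : ℕ) + 1, c) ∈ cells (n+1) μ := (mem_cells_succ i).mpr hcμ
      have hcol := T.col (i : ℕ) c hcell
      have hmem := (T.mem _ hcell).1
      omega
    have hcc : c < μ i.castSucc :=
      lt_of_lt_of_le hcμ (hμ i.castSucc i.succ (Fin.castSucc_le_succ i))
    have := (tolam_iff T i c).mpr ⟨hcc, h2⟩
    omega
  · calc tolam T i ≤ (Finset.range (μ i.castSucc)).card := Finset.card_filter_le _ _
      _ = μ i.castSucc := Finset.card_range _

lemma mem_cells_tolam (hμ : IsPartitionVec μ) (T : RevTableau (n+1) μ) (a : ℕ × ℕ) :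
    a ∈ cells n (tolam T) ↔ a ∈ cells (n+1) μ ∧ 2 ≤ T.val a := by
  obtain ⟨r, c⟩ := a
  constructor
  · intro h
    rw [mem_cells] at h
    obtain ⟨hr, hc⟩ := h
    have := (tolam_iff T ⟨r, hr⟩ c).mp hc
    exact ⟨(mem_cells_castSucc ⟨r, hr⟩).mpr this.1, this.2⟩
  · rintro ⟨h, h2⟩
    have hr1 : r < n + 1 := (mem_cells.mp h).1
    have hrn : r < n := by
      by_contra hrn
      have hreq : r = n := by omega
      have := val_add_fst_le hμ T r c h
      omega
    rw [mem_cells]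
    refine ⟨hrn, ?_⟩
    exact (tolam_iff T ⟨r, hrn⟩ c).mpr ⟨(mem_cells_castSucc ⟨r, hrn⟩).mp h, h2⟩

lemma cells_lam_subset {lam : Fin n → ℕ} (hl : lam ∈ box n μ) :
    cells n lam ⊆ cells (n+1) μ := by
  intro a ha
  obtain ⟨r, c⟩ := a
  rw [mem_cells] at ha
  obtain ⟨hr, hc⟩ := ha
  have := ((mem_box).mp hl ⟨r, hr⟩).2
  exact (mem_cells_castSucc ⟨r, hr⟩).mpr (lt_of_lt_of_le hc this)

/-- Reassembling a tableau from the strip and an inner tableau. -/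
def glue (hμ : IsPartitionVec μ) {lam : Fin n → ℕ} (hl : lam ∈ box n μ)
    (S : RevTableau n lam) : RevTableau (n+1) μ where
  val a := if a ∈ cells n lam then S.val a + 1 else if a ∈ cells (n+1) μ then 1 else 0
  mem a ha := by
    by_cases h : a ∈ cells n lam
    · rw [if_pos h]
      exact ⟨by omega, by have := (S.mem a h).2; omega⟩
    · rw [if_neg h, if_pos ha]
      exact ⟨le_refl _, by omega⟩
  zero a ha := by
    rw [if_neg (fun hc => ha (cells_lam_subset hl hc)), if_neg ha]
  row r c h := by
    have hc : (r, c) ∈ cells (n+1) μ := cells_left h (by omega)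
    by_cases h1 : (r, c + 1) ∈ cells n lam
    · have h0 : (r, c) ∈ cells n lam := cells_left h1 (by omega)
      rw [if_pos h1, if_pos h0]
      have := S.row r c h1
      omega
    · rw [if_neg h1, if_pos h]
      by_cases h0 : (r, c) ∈ cells n lam
      · rw [if_pos h0]; omega
      · rw [if_neg h0, if_pos hc]
  col r c h := by
    have hr1 : r + 1 < n + 1 := (mem_cells.mp h).1
    have hrn : r < n := by omega
    have hcμ : c < μ ⟨r + 1, hr1⟩ := (mem_cells' hr1).mp h
    have hlow : μ (Fin.succ ⟨r, hrn⟩) ≤ lam ⟨r, hrn⟩ := ((mem_box).mp hl ⟨r, hrn⟩).1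
    have hμsucc : μ (Fin.succ ⟨r, hrn⟩) = μ ⟨r + 1, hr1⟩ := by
      congr 1
    have h0 : (r, c) ∈ cells n lam := by
      rw [mem_cells' hrn]
      omega
    rw [if_pos h0]
    by_cases h1 : (r + 1, c) ∈ cells n lam
    · rw [if_pos h1]
      have := S.col r c h1
      omega
    · rw [if_neg h1, if_pos h]
      have := (S.mem _ h0).1
      omega

lemma glue_val_inner (hμ : IsPartitionVec μ) {lam : Fin n → ℕ} (hl : lam ∈ box n μ)
    (S : RevTableau n lam) {a : ℕ × ℕ} (ha : a ∈ cells n lam) :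
    (glue hμ hl S).val a = S.val a + 1 := if_pos ha

lemma glue_val_strip (hμ : IsPartitionVec μ) {lam : Fin n → ℕ} (hl : lam ∈ box n μ)
    (S : RevTableau n lam) {a : ℕ × ℕ} (ha : a ∈ cells (n+1) μ) (ha' : a ∉ cells n lam) :
    (glue hμ hl S).val a = 1 := by
  show (if _ then _ else _) = 1
  rw [if_neg ha', if_pos ha]

lemma glue_ge2_iff (hμ : IsPartitionVec μ) {lam : Fin n → ℕ} (hl : lam ∈ box n μ)
    (S : RevTableau n lam) (a : ℕ × ℕ) :
    2 ≤ (glue hμ hl S).val a ↔ a ∈ cells n lam := by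
  constructor
  · intro h2
    by_contra hc
    by_cases ha : a ∈ cells (n+1) μ
    · rw [glue_val_strip hμ hl S ha hc] at h2; omega
    · rw [(glue hμ hl S).zero a ha] at h2; omega
  · intro hc
    rw [glue_val_inner hμ hl S hc]
    have := (S.mem a hc).1
    omega

lemma tolam_glue (hμ : IsPartitionVec μ) {lam : Fin n → ℕ} (hl : lam ∈ box n μ)
    (S : RevTableau n lam) : tolam (glue hμ hl S) = lam := by
  funext i
  rw [tolam]
  have hset : (Finset.range (μ i.castSucc)).filter
      (fun c => 2 ≤ (glue hμ hl S).val ((i : ℕ), c)) = Finset.range (lam i) := by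
    ext c
    simp only [Finset.mem_filter, Finset.mem_range]
    rw [glue_ge2_iff hμ hl S]
    have hmc : ((i : ℕ), c) ∈ cells n lam ↔ c < lam i := mem_cells' i.isLt
    rw [hmc]
    constructor
    · exact fun h => h.2
    · intro h
      exact ⟨lt_of_lt_of_le h ((mem_box.mp hl i).2), h⟩
  rw [hset, Finset.card_range]

/-- The inner tableau of entries `≥ 2`, decremented. -/
def innerT (hμ : IsPartitionVec μ) (T : RevTableau (n+1) μ) : RevTableau n (tolam T) where
  val a := if a ∈ cells n (tolam T) then T.val a - 1 else 0
  mem a ha := by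
    rw [if_pos ha]
    have h1 := (mem_cells_tolam hμ T a).mp ha
    have h2 := (T.mem a h1.1).2
    exact ⟨by omega, by omega⟩
  zero a ha := if_neg ha
  row r c h := by
    have h0 : (r, c) ∈ cells n (tolam T) := cells_left h (by omega)
    rw [if_pos h, if_pos h0]
    have h1 := (mem_cells_tolam hμ T _).mp h
    have := T.row r c h1.1
    omega
  col r c h := by
    have h1 := (mem_cells_tolam hμ T _).mp h
    have hr1 : r + 1 < n := (mem_cells.mp h).1
    have hrn : r < n := by omega
    have hcl : c < tolam T ⟨r + 1, hr1⟩ := (mem_cells' hr1).mp h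
    have hcell0 : (r, c) ∈ cells (n+1) μ := by
      have hcm : c < μ (Fin.castSucc ⟨r+1, hr1⟩) := ((tolam_iff T ⟨r+1, hr1⟩ c).mp hcl).1
      have hle : μ (Fin.castSucc ⟨r+1, hr1⟩) ≤ μ ⟨r, by omega⟩ →
          c < μ ⟨r, (by omega : r < n + 1)⟩ := fun hx => lt_of_lt_of_le hcm hx
      rw [mem_cells' (by omega : r < n + 1)]
      apply hle
      apply hμ
      rw [Fin.le_def]
      simp
    have hcol := T.col r c h1.1
    have h2 : 2 ≤ T.val (r + 1, c) := h1.2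
    have h0 : (r, c) ∈ cells n (tolam T) := by
      rw [mem_cells_tolam hμ T]
      exact ⟨hcell0, by omega⟩
    rw [if_pos h, if_pos h0]
    omega

lemma glue_innerT (hμ : IsPartitionVec μ) (T : RevTableau (n+1) μ) :
    glue hμ (tolam_mem_box hμ T) (innerT hμ T) = T := by
  apply RevTableau.ext'
  funext a
  show (if a ∈ cells n (tolam T) then (innerT hμ T).val a + 1
    else if a ∈ cells (n+1) μ then 1 else 0) = T.val a
  by_cases h : a ∈ cells n (tolam T)
  · rw [if_pos h]
    show (if a ∈ cells n (tolam T) then T.val a - 1 else 0) + 1 = T.val a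
    rw [if_pos h]
    have := ((mem_cells_tolam hμ T a).mp h).2
    omega
  · rw [if_neg h]
    by_cases ha : a ∈ cells (n+1) μ
    · rw [if_pos ha]
      have h1 := (T.mem a ha).1
      have h2 : ¬ 2 ≤ T.val a := by
        intro h2
        exact h ((mem_cells_tolam hμ T a).mpr ⟨ha, h2⟩)
      omega
    · rw [if_neg ha, (T.zero a ha)]

lemma glue_injective (hμ : IsPartitionVec μ) {lam : Fin n → ℕ} (hl : lam ∈ box n μ)
    {S₁ S₂ : RevTableau n lam} (h : glue hμ hl S₁ = glue hμ hl S₂) : S₁ = S₂ := by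
  apply RevTableau.ext'
  funext a
  by_cases ha : a ∈ cells n lam
  · have h1 := glue_val_inner hμ hl S₁ ha
    have h2 := glue_val_inner hμ hl S₂ ha
    rw [h] at h1
    omega
  · rw [S₁.zero a ha, S₂.zero a ha]

lemma rename_factor (v : ℕ) (hv1 : 1 ≤ v) (hv2 : v ≤ n) (a : ℕ × ℕ) :
    rename (emb n) (factor n v a) = factor (n+1) (v+1) a := by
  rw [factor, factor, map_sub]
  congr 1
  · rw [xv, xv, dif_pos (show v - 1 < n by omega), dif_pos (show v + 1 - 1 < n + 1 by omega)]
    rw [rename_X]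
    show X (Sum.map Fin.succ id (Sum.inl _)) = _
    simp only [Sum.map_inl]
    exact congrArg X (congrArg Sum.inl (Fin.ext (by simp only [Fin.val_succ]; omega)))
  · rw [rename_yI]
    congr 1
    push_cast
    ring

lemma mem_strip {lam : Fin n → ℕ} {r c : ℕ} :
    ((r, c) ∈ cells (n+1) μ \ cells n lam) ↔
      ∃ h : r < n + 1, lamext lam ⟨r, h⟩ ≤ c ∧ c < μ ⟨r, h⟩ := by
  rw [Finset.mem_sdiff]
  constructor
  · rintro ⟨h1, h2⟩
    rw [mem_cells] at h1
    obtain ⟨hr, hc⟩ := h1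
    refine ⟨hr, ?_, hc⟩
    rw [lamext]
    split
    · rename_i hrn
      by_contra hlt
      push_neg at hlt
      exact h2 ((mem_cells' hrn).mpr hlt)
    · omega
  · rintro ⟨hr, hle, hlt⟩
    refine ⟨(mem_cells' hr).mpr hlt, ?_⟩
    intro hmem
    have hrn : r < n := (mem_cells.mp hmem).1
    have hcl : c < lam ⟨r, hrn⟩ := (mem_cells' hrn).mp hmem
    have hle' : lam ⟨r, hrn⟩ ≤ c := by simpa [lamext, hrn] using hle
    omega

lemma xv_one : xv (n+1) 1 = X (Sum.inl (0 : Fin (n+1))) := by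
  rw [xv, dif_pos (show 1 - 1 < n + 1 by omega)]
  exact congrArg X (congrArg Sum.inl (Fin.ext (by simp)))

lemma strip_prod {lam : Fin n → ℕ} (hl : lam ∈ box n μ) :
    ∏ a ∈ cells (n+1) μ \ cells n lam, factor (n+1) 1 a = Phi n μ lam := by
  have hsig : ∏ p ∈ (Finset.univ : Finset (Fin (n+1))).sigma
      (fun i => Finset.Ico (lamext lam i + (n - (i : ℕ))) (μ i + (n - (i : ℕ)))),
      (X (Sum.inl (0 : Fin (n+1))) - yI (n+1) ((p.2 : ℤ) + 1)) = Phi n μ lam := by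
    rw [Finset.prod_sigma, Phi]
  rw [← hsig]
  refine (Finset.prod_nbij'
    (i := fun p : (_ : Fin (n+1)) × ℕ => ((p.1 : ℕ), p.2 - (n - (p.1 : ℕ))))
    (j := fun a : ℕ × ℕ =>
      ⟨if h : a.1 < n + 1 then (⟨a.1, h⟩ : Fin (n+1)) else 0, a.2 + (n - a.1)⟩)
    ?_ ?_ ?_ ?_ ?_).symm
  · rintro ⟨i, s⟩ hp
    rw [Finset.mem_sigma] at hp
    obtain ⟨-, hs⟩ := hp
    dsimp only at hs ⊢
    rw [Finset.mem_Ico] at hs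
    rw [mem_strip]
    have hi : (i : ℕ) < n + 1 := i.isLt
    have hmk : (⟨(i : ℕ), hi⟩ : Fin (n+1)) = i := Fin.ext rfl
    refine ⟨hi, ?_, ?_⟩ <;> rw [hmk] <;> omega
  · rintro ⟨r, c⟩ ha
    rw [mem_strip] at ha
    obtain ⟨hr, hle, hlt⟩ := ha
    rw [Finset.mem_sigma]
    refine ⟨Finset.mem_univ _, ?_⟩
    dsimp only
    rw [dif_pos hr]
    dsimp only
    rw [Finset.mem_Ico]
    constructor <;> omega
  · rintro ⟨i, s⟩ hp
    rw [Finset.mem_sigma] at hp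
    obtain ⟨-, hs⟩ := hp
    dsimp only at hs ⊢
    rw [Finset.mem_Ico] at hs
    have hi : (i : ℕ) < n + 1 := i.isLt
    rw [dif_pos hi]
    have h1 : (⟨(i : ℕ), hi⟩ : Fin (n+1)) = i := Fin.ext rfl
    have h2 : s - (n - (i : ℕ)) + (n - (i : ℕ)) = s := by omega
    rw [h1, h2]
  · rintro ⟨r, c⟩ ha
    rw [mem_strip] at ha
    obtain ⟨hr, hle, hlt⟩ := ha
    dsimp only
    rw [dif_pos hr]
    dsimp only
    simp only [Prod.mk.injEq]
    refine ⟨by trivial, by omega⟩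
  · rintro ⟨i, s⟩ hp
    rw [Finset.mem_sigma] at hp
    obtain ⟨-, hs⟩ := hp
    dsimp only at hs ⊢
    rw [Finset.mem_Ico] at hs
    rw [factor, xv_one]
    congr 1
    rw [yI, yI]
    have hi : (i : ℕ) < n + 1 := i.isLt
    have : ((s : ℤ) + 1) = ((n : ℤ) + 1) + 1 - 1 + ((s - (n - (i : ℕ)) : ℕ) : ℤ) - ((i : ℕ) : ℤ) := by
      omega
    rw [this]
    push_cast
    ring_nf

lemma glue_weight (hμ : IsPartitionVec μ) {lam : Fin n → ℕ} (hl : lam ∈ box n μ)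
    (S : RevTableau n lam) :
    ∏ a ∈ cells (n+1) μ, factor (n+1) ((glue hμ hl S).val a) a
      = Phi n μ lam * rename (emb n) (∏ a ∈ cells n lam, factor n (S.val a) a) := by
  rw [← Finset.prod_sdiff (cells_lam_subset hl)]
  congr 1
  · rw [← strip_prod hl]
    apply Finset.prod_congr rfl
    intro a ha
    rw [glue_val_strip hμ hl S (Finset.mem_sdiff.mp ha).1 (Finset.mem_sdiff.mp ha).2]
  · rw [map_prod]
    apply Finset.prod_congr rfl
    intro a ha
    rw [glue_val_inner hμ hl S ha,
      ← rename_factor (S.val a) (S.mem a ha).1 (S.mem a ha).2]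

lemma schur_branch' (hμ : IsPartitionVec μ) :
    fSchur (n+1) μ = ∑ lam ∈ box n μ, Phi n μ lam * rename (emb n) (fSchur n lam) := by
  classical
  rw [fSchur_eq_sum]
  rw [← Finset.sum_fiberwise_of_maps_to (g := tolam) (fun T _ => tolam_mem_box hμ T)]
  apply Finset.sum_congr rfl
  intro lam hlam
  rw [fSchur_eq_sum, map_sum, Finset.mul_sum]
  refine (Finset.sum_bij (fun (S : RevTableau n lam) _ => glue hμ hlam S)
    ?_ ?_ ?_ ?_).symm
  · intro S _
    simp only [Finset.mem_filter, Finset.mem_univ, true_and]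
    exact tolam_glue hμ hlam S
  · intro S1 _ S2 _ h
    exact glue_injective hμ hlam h
  · intro T hT
    simp only [Finset.mem_filter, Finset.mem_univ, true_and] at hT
    subst hT
    exact ⟨innerT hμ T, Finset.mem_univ _, glue_innerT hμ T⟩
  · intro S _
    exact (glue_weight hμ hlam S).symm

end SchurBranch

/-- Branching for the factorial Schur function. -/
lemma schur_branch (n : ℕ) (μ : Fin (n+1) → ℕ) (hμ : IsPartitionVec μ) :
    fSchur (n+1) μ = ∑ lam ∈ box n μ, Phi n μ lam * rename (emb n) (fSchur n lam) :=
  schur_branch' hμ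

end EqLR

namespace EqLR

lemma fSchur_zero (μ : Fin 0 → ℕ) : fSchur 0 μ = 1 := by
  have hc : cells 0 μ = ∅ := by
    ext a
    simp [mem_cells]
  haveI : Unique (RevTableau 0 μ) :=
    { default := ⟨fun _ => 0, fun a ha => by simp [hc] at ha, fun a _ => rfl,
        fun r c h => by simp [hc] at h, fun r c h => by simp [hc] at h⟩,
      uniq := fun T => RevTableau.ext' (funext fun a => T.zero a (by simp [hc])) }
  rw [fSchur_eq_sum, Finset.sum_eq_single_of_mem default (Finset.mem_univ _)
    (fun b _ hb => absurd (Subsingleton.elim b default) hb)]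
  simp [hc]

lemma aDet_zero (ξ : Fin 0 → ℕ) : aDet 0 ξ = 1 := by
  simp [aDet, Matrix.det_isEmpty]

lemma rho_succ_zero (n : ℕ) : (fun i : Fin (n+1) => 0 + rho (n+1) i) = rho (n+1) := by
  funext i; simp

/-- `a_ρ` in `d+1` variables factors. -/
lemma aDet_rho_succ (n : ℕ) :
    aDet (n+1) (rho (n+1)) = vdm n * rename (emb n) (aDet n (rho n)) := by
  have h0 : IsPartitionVec (fun _ : Fin (n+1) => (0 : ℕ)) := fun _ _ _ => le_refl _
  have := det_branch n (fun _ => 0) h0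
  have hbox : box n (fun _ : Fin (n+1) => (0:ℕ)) = {fun _ => 0} := by
    ext lam
    simp [mem_box, funext_iff, Nat.le_zero]
  have hPhi : Phi n (fun _ => 0) (fun _ => 0) = 1 := by
    rw [Phi]
    apply Finset.prod_eq_one
    intro i _
    have : lamext (fun _ : Fin n => (0:ℕ)) i = 0 := by
      simp [lamext]
    rw [this]
    simp
  have hz : (fun i : Fin n => 0 + rho n i) = rho n := funext fun i => zero_add _
  rw [hbox, Finset.sum_singleton, hPhi, one_mul, rho_succ_zero, hz] at this
  exact this.symm

lemma main_ind : ∀ (d : ℕ) (μ : Fin d → ℕ), IsPartitionVec μ →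
    fSchur d μ * aDet d (rho d) = aDet d (fun i => μ i + rho d i) := by
  intro d
  induction d with
  | zero =>
    intro μ _
    rw [fSchur_zero, aDet_zero, aDet_zero, one_mul]
  | succ n ih =>
    intro μ hμ
    rw [schur_branch n μ hμ, aDet_rho_succ n, Finset.sum_mul]
    rw [← det_branch n μ hμ]
    apply Finset.sum_congr rfl
    intro lam hlam
    have : rename (emb n) (fSchur n lam) * rename (emb n) (aDet n (rho n))
        = rename (emb n) (aDet n (fun i => lam i + rho n i)) := by
      rw [← map_mul, ih lam (box_partition hμ hlam)]
    rw [← this]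
    ring

end EqLR

namespace EqLR

/-- Bialternant formula: `s_μ(x|y) = a_{μ+ρ}(x|y) / a_ρ(x|y)`. -/
theorem bialternant (d : ℕ) (hd : 1 ≤ d) (μ : Fin d → ℕ) (hμ : IsPartitionVec μ) :
    fSchur d μ * aDet d (rho d) = aDet d (fun i => μ i + rho d i) :=
  main_ind d μ hμ

end EqLR
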